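/- Let A be a reduced DFA recognizing a k-generalized definite language. Then A avoids pattern P_g: there are no distinct states p ≠ q, and words x, y ∈ Σ⁺, with p·x = p, q·x = q, and p·y = q. -/

import Mathlib

/-- State `q` is reachable from `p` in the DFA `M`. -/
def Reach {α σ : Type*} (M : DFA α σ) (p q : σ) : Prop :=
  ∃ x : List α, M.evalFrom p x = q

/-- A DFA is reduced if it is connected and all pairs of distinct states are
distinguishable by some word. -/
def Reduced {α σ : Type*} (M : DFA α σ) : Prop :=
  (∀ q : σ, ∃ x : List α, M.evalFrom M.start x = q) ∧
  (∀ p q : σ, p ≠ q → ∃ w : List α,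
    ¬ (M.evalFrom p w ∈ M.accept ↔ M.evalFrom q w ∈ M.accept))

/-- `C` is a strongly connected component (class of mutual reachability) of `M`. -/
def IsComponent {α σ : Type*} (M : DFA α σ) (C : Set σ) : Prop :=
  ∃ p : σ, C = {q | Reach M p q ∧ Reach M q p}

/-- A component is a sink if it is closed under all letters. -/
def IsSink {α σ : Type*} (M : DFA α σ) (C : Set σ) : Prop :=
  IsComponent M C ∧ ∀ q ∈ C, ∀ a : α, M.step q a ∈ C

/-- A component is trivial if it is a singleton `{p}` with `p·a ≠ p` for every letter `a`. -/
def IsTrivialComponent {α σ : Type*} (M : DFA α σ) (C : Set σ) : Prop :=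
  IsComponent M C ∧ ∃ p : σ, C = {p} ∧ ∀ a : α, M.step p a ≠ p

/-- `f` is non-permutational on `C`: no subset `D ⊆ C` with `|D| > 1` is mapped
bijectively onto itself by `f`. -/
def NonPermutationalOn {σ : Type*} (f : σ → σ) (C : Set σ) : Prop :=
  ¬ ∃ D : Set σ, D ⊆ C ∧ 1 < D.ncard ∧ Set.BijOn f D D

/-- The automaton avoids pattern `P_d`. -/
def AvoidsPd {α σ : Type*} (M : DFA α σ) : Prop :=
  ¬ ∃ (p q : σ) (x : List α), p ≠ q ∧ x ≠ [] ∧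
    M.evalFrom p x = p ∧ M.evalFrom q x = q

/-- The automaton avoids pattern `P_g`. -/
def AvoidsPg {α σ : Type*} (M : DFA α σ) : Prop :=
  ¬ ∃ (p q : σ) (x y : List α), p ≠ q ∧ x ≠ [] ∧ y ≠ [] ∧
    M.evalFrom p x = p ∧ M.evalFrom q x = q ∧ M.evalFrom p y = q

/-- A language is k-generalized definite if membership only depends on the prefix and
suffix of length k. -/
def IsKGenDefinite {α : Type*} (k : ℕ) (L : Language α) : Prop :=
  ∀ x₁ x₂ y : List α, x₁.length = k → x₂.length = k →
    (x₁ ++ y ++ x₂ ∈ L ↔ x₁ ++ x₂ ∈ L)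


private lemma evalFrom_join_replicate {α σ : Type*} (M : DFA α σ) (p : σ) (x : List α)
    (h : M.evalFrom p x = p) : ∀ m : ℕ, M.evalFrom p (List.replicate m x).flatten = p := by
  intro m
  induction m with
  | zero => rfl
  | succ n ih =>
    simp only [List.replicate_succ, List.flatten_cons, DFA.evalFrom_of_append, h, ih]

theorem genDefinite_avoids_Pg {α σ : Type*} (M : DFA α σ) (k : ℕ)
    (hred : Reduced M) (hdef : IsKGenDefinite k M.accepts) :
    AvoidsPg M := by
  rintro ⟨p, q, x, y, hpq, hx, hy, hpx, hqx, hpy⟩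
  obtain ⟨hconn, hdist⟩ := hred
  obtain ⟨u, hu⟩ := hconn p
  obtain ⟨w, hw⟩ := hdist p q hpq
  set X : List α := (List.replicate k x).flatten with hXdef
  have hXp : M.evalFrom p X = p := evalFrom_join_replicate M p x hpx k
  have hXq : M.evalFrom q X = q := evalFrom_join_replicate M q x hqx k
  have hXlen : k ≤ X.length := by
    have : X.length = k * x.length := by
      simp [hXdef, List.length_flatten, List.map_replicate, List.sum_replicate, Nat.smul_one_eq_cast]
    rw [this]
    have : 1 ≤ x.length := List.length_pos_iff.mpr hx
    calc k = k * 1 := (Nat.mul_one k).symm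
      _ ≤ k * x.length := Nat.mul_le_mul_left k this
  -- decompositions
  set x₁ : List α := (u ++ X).take k with hx1
  set r : List α := (u ++ X).drop k with hr
  have huX : x₁ ++ r = u ++ X := List.take_append_drop k (u ++ X)
  have hlen1 : x₁.length = k := by
    rw [hx1, List.length_take]
    exact min_eq_left (le_trans hXlen (by simp))
  set n : ℕ := (X ++ w).length - k with hn
  set s : List α := (X ++ w).take n with hs
  set x₂ : List α := (X ++ w).drop n with hx2
  have hXw : s ++ x₂ = X ++ w := List.take_append_drop n (X ++ w)
  have hkXw : k ≤ (X ++ w).length := le_trans hXlen (by simp)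
  have hlen2 : x₂.length = k := by
    rw [hx2, List.length_drop, hn]
    omega
  -- the two key words
  have hA : x₁ ++ (r ++ y ++ s) ++ x₂ = u ++ X ++ y ++ (X ++ w) := by
    calc x₁ ++ (r ++ y ++ s) ++ x₂ = (x₁ ++ r) ++ y ++ (s ++ x₂) := by
          simp [List.append_assoc]
      _ = u ++ X ++ y ++ (X ++ w) := by rw [huX, hXw]
  have hB : x₁ ++ (r ++ s) ++ x₂ = u ++ X ++ (X ++ w) := by
    calc x₁ ++ (r ++ s) ++ x₂ = (x₁ ++ r) ++ (s ++ x₂) := by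
          simp [List.append_assoc]
      _ = u ++ X ++ (X ++ w) := by rw [huX, hXw]
  have hAmem : (x₁ ++ (r ++ y ++ s) ++ x₂ ∈ M.accepts) ↔ M.evalFrom q w ∈ M.accept := by
    rw [hA, DFA.mem_accepts]
    show M.evalFrom M.start (u ++ X ++ y ++ (X ++ w)) ∈ M.accept ↔ _
    rw [DFA.evalFrom_of_append, DFA.evalFrom_of_append, DFA.evalFrom_of_append,
      DFA.evalFrom_of_append, hu, hXp, hpy, hXq]
  have hBmem : (x₁ ++ (r ++ s) ++ x₂ ∈ M.accepts) ↔ M.evalFrom p w ∈ M.accept := by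
    rw [hB, DFA.mem_accepts]
    show M.evalFrom M.start (u ++ X ++ (X ++ w)) ∈ M.accept ↔ _
    rw [DFA.evalFrom_of_append, DFA.evalFrom_of_append, DFA.evalFrom_of_append,
      hu, hXp, hXp]
  have h1 := hdef x₁ x₂ (r ++ y ++ s) hlen1 hlen2
  have h2 := hdef x₁ x₂ (r ++ s) hlen1 hlen2
  exact hw (hBmem.symm.trans (h2.trans (h1.symm.trans hAmem)))
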